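/- Let σ > 0 and ψ(g, b) = σ‖y - Xg - b‖₁ + ½‖b‖₂². Then min_{(g,b)} ψ(g,b) = max_{u ∈ σP*} (uᵀy - ½‖u‖₂²), where P* = {u ∈ ker Xᵀ : ‖u‖_∞ ≤ 1}; i.e., strong duality holds between this primal and dual problem. -/

import Mathlib

open Finset Matrix

noncomputable def l1 {n : ℕ} (v : Fin n → ℝ) : ℝ := ∑ i, |v i|

noncomputable def l1On {n : ℕ} (M : Finset (Fin n)) (v : Fin n → ℝ) : ℝ := ∑ i ∈ M, |v i|

noncomputable def linfOn {n : ℕ} (M : Finset (Fin n)) (v : Fin n → ℝ) : ℝ :=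
  sSup ((fun i => |v i|) '' (M : Set (Fin n)))

open scoped Classical in
noncomputable def l0 {n : ℕ} (v : Fin n → ℝ) : ℕ :=
  (Finset.univ.filter (fun i => v i ≠ 0)).card

/-- The leverage constants `c_k(X)`. -/
noncomputable def cK {n p : ℕ} (X : Matrix (Fin n) (Fin p) ℝ) (k : ℕ) : ℝ :=
  sInf {r | ∃ M : Finset (Fin n), M.card = k ∧ ∃ g : Fin p → ℝ, g ≠ 0 ∧
    r = (∑ i ∈ Mᶜ, |X.mulVec g i|) / (∑ i, |X.mulVec g i|)}

/-- `m(X) = max {k ∈ {0,…,n} : c_k(X) > 1/2}`. -/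
noncomputable def mX {n p : ℕ} (X : Matrix (Fin n) (Fin p) ℝ) : ℕ :=
  sSup {k | k ≤ n ∧ cK X k > 1/2}

noncomputable def psi {n p : ℕ} (X : Matrix (Fin n) (Fin p) ℝ) (σ : ℝ) (y : Fin n → ℝ)
    (g : Fin p → ℝ) (b : Fin n → ℝ) : ℝ :=
  σ * l1 (y - X.mulVec g - b) + (1/2) * ∑ i, b i ^ 2

noncomputable def softThresh (t ξ : ℝ) : ℝ :=
  if t < ξ then ξ - t else if ξ < -t then ξ + t else 0

/-! ### Auxiliary lemmas for strong duality -/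

noncomputable def clampR (σ t : ℝ) : ℝ := max (-σ) (min σ t)

noncomputable def hubR (σ t : ℝ) : ℝ := t * clampR σ t - (clampR σ t)^2 / 2

lemma clamp_abs_le {σ : ℝ} (hσ : 0 ≤ σ) (t : ℝ) : |clampR σ t| ≤ σ := by
  rw [abs_le]
  constructor
  · exact le_max_left _ _
  · exact max_le (by linarith) (min_le_left _ _)

lemma clamp_lipschitz (σ a b : ℝ) : |clampR σ a - clampR σ b| ≤ |a - b| := by
  unfold clampR
  rcases abs_cases (a - b) with ⟨h1, h2⟩ | ⟨h1, h2⟩ <;>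
  · simp only [max_def, min_def]
    split_ifs <;> rw [abs_sub_le_iff] <;> constructor <;> linarith

lemma hub_ge {σ : ℝ} (hσ : 0 ≤ σ) {u : ℝ} (hu : |u| ≤ σ) (t : ℝ) :
    u * t - u^2/2 ≤ hubR σ t := by
  rcases abs_le.mp hu with ⟨hu1, hu2⟩
  unfold hubR clampR
  rcases le_total σ t with h | h
  · rw [min_eq_left h, max_eq_right (by linarith)]
    nlinarith
  · rw [min_eq_right h]
    rcases le_total (-σ) t with h2 | h2
    · rw [max_eq_right h2]; nlinarith [sq_nonneg (t - u)]
    · rw [max_eq_left h2]; nlinarith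

lemma hub_le_primal {σ : ℝ} (hσ : 0 ≤ σ) (t b : ℝ) :
    hubR σ t ≤ σ * |t - b| + b^2/2 := by
  set c := clampR σ t with hc
  have hac : |c| ≤ σ := clamp_abs_le hσ t
  have h1 : c * (t - b) ≤ σ * |t - b| := by
    calc c * (t - b) ≤ |c * (t - b)| := le_abs_self _
    _ = |c| * |t - b| := abs_mul _ _
    _ ≤ σ * |t - b| := mul_le_mul_of_nonneg_right hac (abs_nonneg _)
  have h2 : 0 ≤ (b - c)^2 := sq_nonneg _
  unfold hubR
  rw [← hc]
  nlinarith

lemma hub_eq_at_clamp {σ : ℝ} (hσ : 0 ≤ σ) (t : ℝ) :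
    σ * |t - clampR σ t| + (clampR σ t)^2/2 = hubR σ t := by
  unfold hubR clampR
  rcases le_total σ t with h | h
  · rw [min_eq_left h, max_eq_right (by linarith)]
    rw [abs_of_nonneg (by linarith)]; ring
  · rw [min_eq_right h]
    rcases le_total (-σ) t with h2 | h2
    · rw [max_eq_right h2]; simp; ring
    · rw [max_eq_left h2]
      rw [abs_of_nonpos (by linarith)]; ring

lemma hub_lower {σ : ℝ} (hσ : 0 ≤ σ) (t : ℝ) :
    σ * |t| - σ^2/2 ≤ hubR σ t := by
  rcases le_total 0 t with h | h
  · have := hub_ge hσ (u := σ) (by rw [abs_of_nonneg hσ]) t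
    rw [abs_of_nonneg h]; nlinarith
  · have := hub_ge hσ (u := -σ) (by rw [abs_neg, abs_of_nonneg hσ]) t
    rw [abs_of_nonpos h]; nlinarith

lemma hub_smooth {σ : ℝ} (hσ : 0 ≤ σ) (t t' : ℝ) :
    hubR σ t' ≤ hubR σ t + clampR σ t * (t' - t) + (t' - t)^2 := by
  set u := clampR σ t
  set u' := clampR σ t'
  have h1 : u' * t - u'^2/2 ≤ hubR σ t := hub_ge hσ (clamp_abs_le hσ t') t
  have h2 : (u' - u) * (t' - t) ≤ (t' - t)^2 := by
    calc (u' - u) * (t' - t) ≤ |(u' - u) * (t' - t)| := le_abs_self _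
    _ = |u' - u| * |t' - t| := abs_mul _ _
    _ ≤ |t' - t| * |t' - t| := mul_le_mul_of_nonneg_right (clamp_lipschitz σ t' t) (abs_nonneg _)
    _ = (t' - t)^2 := by rw [← abs_mul, ← sq, abs_sq]
  have h3 : hubR σ t' = u' * t' - u'^2/2 := by unfold hubR; ring
  nlinarith

lemma clamp_cont (σ : ℝ) : Continuous (clampR σ) :=
  continuous_const.max (continuous_const.min continuous_id)

lemma hub_cont (σ : ℝ) : Continuous (hubR σ) := by
  unfold hubR
  exact (continuous_id.mul (clamp_cont σ)).sub (((clamp_cont σ).pow 2).div_const 2)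

lemma rank_inj {n p : ℕ} (X : Matrix (Fin n) (Fin p) ℝ) (hX : X.rank = p) :
    Function.Injective X.mulVec := by
  have h := LinearMap.finrank_range_add_finrank_ker X.mulVecLin
  rw [Matrix.rank] at hX
  rw [hX] at h
  simp only [Module.finrank_pi, Fintype.card_fin] at h
  have hker : Module.finrank ℝ (LinearMap.ker X.mulVecLin) = 0 := by omega
  have : LinearMap.ker X.mulVecLin = ⊥ := Submodule.finrank_eq_zero.mp hker
  have hinj := LinearMap.ker_eq_bot.mp this
  intro a b hab
  exact hinj (by simpa [Matrix.mulVecLin_apply] using hab)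

lemma l1X_cont {n p : ℕ} (X : Matrix (Fin n) (Fin p) ℝ) :
    Continuous (fun g : Fin p → ℝ => ∑ i, |X.mulVec g i|) := by
  apply continuous_finset_sum
  intro i _
  apply Continuous.abs
  simp only [Matrix.mulVec, dotProduct]
  exact continuous_finset_sum _ fun j _ => (continuous_const.mul (continuous_apply j))

lemma exists_bound {n p : ℕ} (X : Matrix (Fin n) (Fin p) ℝ)
    (hinj : Function.Injective X.mulVec) :
    ∃ c : ℝ, 0 < c ∧ ∀ g : Fin p → ℝ, ‖g‖ ≤ c * ∑ i, |X.mulVec g i| := by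
  have hf0 : ∀ g : Fin p → ℝ, 0 ≤ ∑ i, |X.mulVec g i| :=
    fun g => Finset.sum_nonneg fun i _ => abs_nonneg _
  rcases Nat.eq_zero_or_pos p with hp | hp
  · refine ⟨1, one_pos, fun g => ?_⟩
    subst hp
    have : g = 0 := Subsingleton.elim _ _
    rw [this]
    simpa using hf0 0
  · haveI : Nonempty (Fin p) := ⟨⟨0, hp⟩⟩
    have hsph : IsCompact (Metric.sphere (0 : Fin p → ℝ) 1) := isCompact_sphere _ _
    have hne : (Metric.sphere (0 : Fin p → ℝ) 1).Nonempty :=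
      NormedSpace.sphere_nonempty.mpr zero_le_one
    obtain ⟨g0, hg0mem, hg0min⟩ := hsph.exists_isMinOn hne ((l1X_cont X).continuousOn)
    set m := ∑ i, |X.mulVec g0 i| with hm
    have hmpos : 0 < m := by
      rcases lt_or_eq_of_le (hf0 g0) with h | h
      · exact h
      · exfalso
        have hXg0 : X.mulVec g0 = 0 := by
          funext i
          have hz := (Finset.sum_eq_zero_iff_of_nonneg
            (fun i (_ : i ∈ Finset.univ) => abs_nonneg (X.mulVec g0 i))).mp h.symm
          have := hz i (Finset.mem_univ i)
          simpa [abs_eq_zero] using this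
        have : g0 = 0 := hinj (by rw [hXg0, Matrix.mulVec_zero])
        rw [mem_sphere_iff_norm] at hg0mem
        simp [this] at hg0mem
    refine ⟨1/m, by positivity, fun g => ?_⟩
    rcases eq_or_ne g 0 with rfl | hg
    · simpa using div_nonneg (hf0 0) hmpos.le
    · have hng : 0 < ‖g‖ := norm_pos_iff.mpr hg
      set g' := ‖g‖⁻¹ • g with hg'
      have hg'mem : g' ∈ Metric.sphere (0 : Fin p → ℝ) 1 := by
        rw [mem_sphere_iff_norm, sub_zero, hg', norm_smul, norm_inv, norm_norm]
        field_simp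
      have hmin := hg0min hg'mem
      have hhom : ∑ i, |X.mulVec g' i| = ‖g‖⁻¹ * ∑ i, |X.mulVec g i| := by
        rw [hg', Matrix.mulVec_smul]
        rw [Finset.mul_sum]
        apply Finset.sum_congr rfl
        intro i _
        simp [abs_mul, abs_of_pos (inv_pos.mpr hng)]
      simp only [Set.mem_setOf_eq] at hmin
      rw [hhom] at hmin
      rw [div_mul_eq_mul_div, le_div_iff₀ hmpos]
      have := mul_le_mul_of_nonneg_left hmin hng.le
      rw [← mul_assoc, mul_inv_cancel₀ hng.ne', one_mul] at this
      linarith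

lemma exists_min {n p : ℕ} (X : Matrix (Fin n) (Fin p) ℝ) {σ : ℝ} (hσ : 0 < σ)
    (y : Fin n → ℝ)
    (hbd : ∃ c : ℝ, 0 < c ∧ ∀ g : Fin p → ℝ, ‖g‖ ≤ c * ∑ i, |X.mulVec g i|) :
    ∃ gs : Fin p → ℝ, ∀ g : Fin p → ℝ,
      (∑ i, hubR σ ((y - X.mulVec gs) i)) ≤ ∑ i, hubR σ ((y - X.mulVec g) i) := by
  obtain ⟨c, hc, hcb⟩ := hbd
  set φ : (Fin p → ℝ) → ℝ := fun g => ∑ i, hubR σ ((y - X.mulVec g) i) with hφ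
  have hcont : Continuous φ := by
    apply continuous_finset_sum
    intro i _
    apply (hub_cont σ).comp
    apply Continuous.sub continuous_const
    simp only [Matrix.mulVec, dotProduct]
    exact continuous_finset_sum _ fun j _ => (continuous_const.mul (continuous_apply j))
  set S : Set (Fin p → ℝ) := {g | φ g ≤ φ 0} with hS
  have hclosed : IsClosed S := isClosed_le hcont continuous_const
  have hlb : ∀ g : Fin p → ℝ, σ * ∑ i, |(y - X.mulVec g) i| - n * (σ^2/2) ≤ φ g := by
    intro g
    have : ∀ i ∈ Finset.univ, σ * |(y - X.mulVec g) i| - σ^2/2 ≤ hubR σ ((y - X.mulVec g) i) :=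
      fun i _ => hub_lower hσ.le _
    have hsum := Finset.sum_le_sum this
    rw [Finset.sum_sub_distrib, Finset.sum_const, ← Finset.mul_sum] at hsum
    simpa [nsmul_eq_mul, hφ] using hsum
  have hbound : ∀ g ∈ S, ‖g‖ ≤ c * ((φ 0 + n * (σ^2/2))/σ + ∑ i, |y i|) := by
    intro g hg
    have h1 := hlb g
    have h2 : φ g ≤ φ 0 := hg
    have h3 : ∑ i, |X.mulVec g i| ≤ ∑ i, |(y - X.mulVec g) i| + ∑ i, |y i| := by
      rw [← Finset.sum_add_distrib]
      apply Finset.sum_le_sum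
      intro i _
      have : X.mulVec g i = -((y - X.mulVec g) i) + y i := by simp [Pi.sub_apply]
      rw [this]
      exact (abs_add_le _ _).trans (by rw [abs_neg])
    have h4 : ∑ i, |(y - X.mulVec g) i| ≤ (φ 0 + n * (σ^2/2))/σ := by
      rw [le_div_iff₀ hσ]
      nlinarith
    calc ‖g‖ ≤ c * ∑ i, |X.mulVec g i| := hcb g
    _ ≤ c * ((φ 0 + n * (σ^2/2))/σ + ∑ i, |y i|) := by
        apply mul_le_mul_of_nonneg_left _ hc.le
        linarith
  have hbdd : Bornology.IsBounded S := by
    apply Bornology.IsBounded.subset (Metric.isBounded_closedBall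
      (x := (0 : Fin p → ℝ)) (r := c * ((φ 0 + n * (σ^2/2))/σ + ∑ i, |y i|)))
    intro g hg
    rw [Metric.mem_closedBall, dist_zero_right]
    exact hbound g hg
  have hcpt : IsCompact S := Metric.isCompact_of_isClosed_isBounded hclosed hbdd
  have h0S : (0 : Fin p → ℝ) ∈ S := by simp only [hS, Set.mem_setOf_eq, le_refl]
  have hSne : S.Nonempty := ⟨0, h0S⟩
  obtain ⟨gs, hgsS, hgsmin⟩ := hcpt.exists_isMinOn hSne hcont.continuousOn
  refine ⟨gs, fun g => ?_⟩
  by_cases hgS : g ∈ S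
  · exact hgsmin hgS
  · have h1 : φ 0 < φ g := lt_of_not_ge hgS
    have h2 : φ gs ≤ φ 0 := hgsmin h0S
    linarith

lemma stationarity {n p : ℕ} (X : Matrix (Fin n) (Fin p) ℝ) {σ : ℝ} (hσ : 0 < σ)
    (y : Fin n → ℝ) (gs : Fin p → ℝ)
    (hmin : ∀ g : Fin p → ℝ,
      (∑ i, hubR σ ((y - X.mulVec gs) i)) ≤ ∑ i, hubR σ ((y - X.mulVec g) i)) :
    Xᵀ.mulVec (fun i => clampR σ ((y - X.mulVec gs) i)) = 0 := by
  set t : Fin n → ℝ := fun i => (y - X.mulVec gs) i with ht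
  set u : Fin n → ℝ := fun i => clampR σ (t i) with hu
  funext j
  set v : Fin n → ℝ := fun i => X i j with hv
  set A : ℝ := ∑ i, u i * v i with hA
  set M : ℝ := ∑ i, (v i)^2 with hM
  have hM0 : 0 ≤ M := Finset.sum_nonneg fun i _ => sq_nonneg _
  have key : ∀ s : ℝ, 0 ≤ -(s * A) + s^2 * M := by
    intro s
    have hg := hmin (gs + s • ((Pi.single j 1 : Fin p → ℝ)))
    have hXg : X.mulVec (gs + s • ((Pi.single j 1 : Fin p → ℝ))) =
        fun i => X.mulVec gs i + s * v i := by
      funext i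
      rw [Matrix.mulVec_add, Matrix.mulVec_smul, Matrix.mulVec_single]
      simp [hv, mul_comm]
    have hterm : ∀ i ∈ Finset.univ,
        hubR σ ((y - X.mulVec (gs + s • ((Pi.single j 1 : Fin p → ℝ)))) i) ≤
          hubR σ (t i) + clampR σ (t i) * (-(s * v i)) + (s * v i)^2 := by
      intro i _
      have hti : (y - X.mulVec (gs + s • ((Pi.single j 1 : Fin p → ℝ)))) i = t i - s * v i := by
        rw [hXg]; simp [ht, Pi.sub_apply]; ring
      rw [hti]
      have := hub_smooth hσ.le (t i) (t i - s * v i)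
      convert this using 2 <;> ring
    have hsum := Finset.sum_le_sum hterm
    have e1 : ∑ i, clampR σ (t i) * (-(s * v i)) = -(s * A) := by
      rw [hA, Finset.mul_sum, ← Finset.sum_neg_distrib]
      apply Finset.sum_congr rfl
      intro i _
      simp only [hu]; ring
    have e2 : ∑ i, (s * v i)^2 = s^2 * M := by
      rw [hM, Finset.mul_sum]
      apply Finset.sum_congr rfl
      intro i _
      ring
    have hexp : ∑ i, (hubR σ (t i) + clampR σ (t i) * (-(s * v i)) + (s * v i)^2)
        = (∑ i, hubR σ (t i)) - s * A + s^2 * M := by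
      rw [Finset.sum_add_distrib, Finset.sum_add_distrib, e1, e2]
      ring
    rw [hexp] at hsum
    have := hg.trans hsum
    simp only [ht] at this
    linarith
  have hA0 : A = 0 := by
    have h1 := key (A / (M + 1))
    have hM1 : (0:ℝ) < M + 1 := by linarith
    have e : -((A/(M+1)) * A) + (A/(M+1))^2 * M = (-(A^2)) / (M+1)^2 := by
      field_simp
      ring
    rw [e] at h1
    have h3 : 0 ≤ -(A^2) := by
      rcases div_nonneg_iff.mp h1 with ⟨h, _⟩ | ⟨_, h⟩
      · exact h
      · nlinarith
    have h4 : A^2 = 0 := le_antisymm (by linarith) (sq_nonneg A)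
    exact pow_eq_zero_iff (by norm_num) |>.mp h4
  show Xᵀ.mulVec u j = 0
  rw [Matrix.mulVec, dotProduct] at *
  rw [← hA0, hA]
  apply Finset.sum_congr rfl
  intro i _
  simp [Matrix.transpose_apply, hv, mul_comm]

lemma orth_sum {n p : ℕ} (X : Matrix (Fin n) (Fin p) ℝ) (u : Fin n → ℝ)
    (hXu : Xᵀ.mulVec u = 0) (g : Fin p → ℝ) : ∑ i, u i * X.mulVec g i = 0 := by
  have h : ∑ i, u i * X.mulVec g i = ∑ j, (Xᵀ.mulVec u j) * g j := by
    simp only [Matrix.mulVec, dotProduct, Matrix.transpose_apply,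
      Finset.mul_sum, Finset.sum_mul]
    rw [Finset.sum_comm]
    apply Finset.sum_congr rfl
    intro i _
    apply Finset.sum_congr rfl
    intro j _
    ring
  rw [h, hXu]
  simp

theorem psi_strong_duality {n p : ℕ} (X : Matrix (Fin n) (Fin p) ℝ)
    (hX : X.rank = p) (σ : ℝ) (hσ : 0 < σ) (y : Fin n → ℝ) :
    ∃ γ : ℝ,
      IsLeast {r | ∃ (g : Fin p → ℝ) (b : Fin n → ℝ), r = psi X σ y g b} γ ∧
      IsGreatest {r | ∃ u : Fin n → ℝ, Xᵀ.mulVec u = 0 ∧ (∀ i, |u i| ≤ σ) ∧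
        r = (∑ i, u i * y i) - (1/2) * ∑ i, u i ^ 2} γ := by
  obtain ⟨gs, hmin⟩ := exists_min X hσ y (exists_bound X (rank_inj X hX))
  set t : Fin n → ℝ := fun i => (y - X.mulVec gs) i with ht
  set u : Fin n → ℝ := fun i => clampR σ (t i) with hu
  have hXu : Xᵀ.mulVec u = 0 := stationarity X hσ y gs hmin
  set γ : ℝ := ∑ i, hubR σ (t i) with hγ
  have habs : ∀ i, |u i| ≤ σ := fun i => clamp_abs_le hσ.le (t i)
  -- psi expansion
  have hpsi : ∀ (g : Fin p → ℝ) (b : Fin n → ℝ),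
      psi X σ y g b = ∑ i, (σ * |(y - X.mulVec g) i - b i| + (b i)^2/2) := by
    intro g b
    unfold psi l1
    rw [Finset.mul_sum, Finset.mul_sum, ← Finset.sum_add_distrib]
    apply Finset.sum_congr rfl
    intro i _
    simp only [Pi.sub_apply]
    ring
  refine ⟨γ, ⟨⟨gs, u, ?_⟩, ?_⟩, ⟨u, hXu, habs, ?_⟩, ?_⟩
  · -- γ = psi X σ y gs u
    rw [hpsi gs u, hγ]
    apply Finset.sum_congr rfl
    intro i _
    rw [← hub_eq_at_clamp hσ.le (t i)]
  · -- lower bound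
    rintro r ⟨g, b, rfl⟩
    rw [hpsi g b]
    calc γ ≤ ∑ i, hubR σ ((y - X.mulVec g) i) := hmin g
    _ ≤ ∑ i, (σ * |(y - X.mulVec g) i - b i| + (b i)^2/2) :=
        Finset.sum_le_sum fun i _ => hub_le_primal hσ.le _ _
  · -- γ equals dual value at u
    have horth := orth_sum X u hXu gs
    have h1 : γ = ∑ i, (u i * t i - (u i)^2/2) := by
      rw [hγ]
      apply Finset.sum_congr rfl
      intro i _
      unfold hubR
      simp only [hu]
      ring
    have h2 : ∑ i, (u i * t i - (u i)^2/2)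
        = (∑ i, u i * y i) - (∑ i, u i * X.mulVec gs i) - (1/2) * ∑ i, u i ^ 2 := by
      rw [Finset.mul_sum, ← Finset.sum_sub_distrib, ← Finset.sum_sub_distrib]
      apply Finset.sum_congr rfl
      intro i _
      simp only [ht, Pi.sub_apply]
      ring
    rw [h1, h2, horth]
    ring
  · -- upper bound for dual
    rintro r ⟨w, hXw, hwabs, rfl⟩
    have horth := orth_sum X w hXw gs
    have h2 : (∑ i, w i * y i) - (1/2) * ∑ i, w i ^ 2
        = ∑ i, (w i * t i - (w i)^2/2) := by
      rw [Finset.mul_sum]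
      have : (∑ i, w i * y i) = (∑ i, w i * t i) + ∑ i, w i * X.mulVec gs i := by
        rw [← Finset.sum_add_distrib]
        apply Finset.sum_congr rfl
        intro i _
        simp only [ht, Pi.sub_apply]
        ring
      rw [this, horth, add_zero, ← Finset.sum_sub_distrib]
      apply Finset.sum_congr rfl
      intro i _
      ring
    rw [h2, hγ]
    exact Finset.sum_le_sum fun i _ => hub_ge hσ.le (hwabs i) (t i)
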